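/- Let M be a loopless matroid with ground set E and lattice of flats L, and let L̂ = L \ {∅, E}. Then ∑_{F ∈ L̂} (#F)·χ̄_{M/F}(q) = (#E)·[rk M − 1]_q. -/

import Mathlib

open Polynomial

namespace MatroidZeta

open scoped Classical

variable {α : Type*}

/-- The `q`-analogue `[n]_q = 1 + q + ⋯ + q^(n-1)` of a natural number `n`, in `ℤ[q]`. -/
noncomputable def qAnalogue (n : ℕ) : Polynomial ℤ := ∑ i ∈ Finset.range n, X ^ i

/-- The rank of a set `X` in a matroid `M`: the largest size of an independent subset of `X`. -/
noncomputable def rk (M : Matroid α) (X : Set α) : ℕ :=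
  sSup {n | ∃ I, M.Indep I ∧ I ⊆ X ∧ I.ncard = n}

/-- Contraction `M / C` of a matroid, defined as the dual of the deletion of `C`
from the dual matroid. -/
noncomputable def contract (M : Matroid α) (C : Set α) : Matroid α :=
  ((M✶.restrict (M✶.E \ C))✶)

/-- A matroid is loopless if no element of the ground set lies in the closure of `∅`. -/
def Loopless (M : Matroid α) : Prop := M.closure ∅ = ∅

/-- The characteristic polynomial `χ_M(q) = ∑_{S ⊆ E} (-1)^{#S} q^(rk M - rk S)`. -/
noncomputable def charPoly (M : Matroid α) : Polynomial ℤ :=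
  ∑ᶠ S ∈ {S : Set α | S ⊆ M.E}, (-1 : ℤ) ^ S.ncard • (X : Polynomial ℤ) ^ (rk M M.E - rk M S)

/-- The reduced characteristic polynomial
`χ̄_M(q) = χ_M(q)/(q-1) = ∑_{S ⊆ E} (-1)^{#S} [rk M - rk S]_q`. -/
noncomputable def redCharPoly (M : Matroid α) : Polynomial ℤ :=
  ∑ᶠ S ∈ {S : Set α | S ⊆ M.E}, (-1 : ℤ) ^ S.ncard • qAnalogue (rk M M.E - rk M S)

/-- `wt_M(w) = max_{B basis of M} ∑_{e ∈ B} w e`. -/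
noncomputable def wt (M : Matroid α) (w : α → ℝ) : ℝ :=
  sSup {x | ∃ B, M.IsBase B ∧ x = ∑ᶠ e ∈ B, w e}

/-- The initial matroid `M_w`: the matroid on the ground set of `M` whose bases are the
bases of `M` of maximal `w`-weight.  (Such a matroid exists and is unique.) -/
noncomputable def initialMatroid (M : Matroid α) (w : α → ℝ) : Matroid α :=
  if h : ∃ N : Matroid α, N.E = M.E ∧
      ∀ B, N.IsBase B ↔ M.IsBase B ∧ ∑ᶠ e ∈ B, w e = wt M w
  then h.choose else M

/-- A flag of non-minimal flats of `M`: a chain of flats strictly above `cl(∅)`. -/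
def IsFlag (M : Matroid α) (C : Finset (Set α)) : Prop :=
  (∀ F ∈ C, M.IsFlat F ∧ M.closure ∅ ⊂ F) ∧ IsChain (· ⊆ ·) (C : Set (Set α))

/-- `N(M)`: the set of flags of non-minimal flats of `M`. -/
def flags (M : Matroid α) : Set (Finset (Set α)) := {C | IsFlag M C}

/-- `N°(M)`: flags not containing the ground set. -/
def flagsCirc (M : Matroid α) : Set (Finset (Set α)) := {C | IsFlag M C ∧ M.E ∉ C}

/-- `N*(M)`: flags containing the ground set. -/
def flagsStar (M : Matroid α) : Set (Finset (Set α)) := {C | IsFlag M C ∧ M.E ∈ C}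

/-- `z_C(F)`: the largest member of the chain `C` strictly below `F` (or `∅` if none). -/
def zmin (C : Finset (Set α)) (F : Set α) : Set α := ⋃₀ {G | G ∈ C ∧ G ⊂ F}

/-- The weight vector `∑_{F ∈ C} v_F`, a point in the relative interior of the cone `σ_C`. -/
noncomputable def flagWeight (C : Finset (Set α)) : α → ℝ :=
  fun e => ∑ F ∈ C, if e ∈ F then (1 : ℝ) else 0

/-- The initial matroid `M_C` of a flag `C`. -/
noncomputable def flagMatroid (M : Matroid α) (C : Finset (Set α)) : Matroid α :=
  initialMatroid M (flagWeight C)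


section PolyAux

lemma X_sub_one_ne_zero : (X - 1 : Polynomial ℤ) ≠ 0 := by
  intro h
  simpa using congrArg (Polynomial.eval 0) h

lemma X_sub_one_mul_qA (m : ℕ) :
    (X - 1 : Polynomial ℤ) * qAnalogue m = X ^ m - 1 := by
  rw [mul_comm, qAnalogue]
  simpa using geom_sum_mul (X : Polynomial ℤ) m

end PolyAux

section Aux

open Set Matroid

variable {M : Matroid α} {X Y I J C B : Set α} {e x y : α}

/-- subsets of `G` whose coercion satisfies `P`, as a `Finset`. -/
noncomputable def fil (G : Finset α) (P : Set α → Prop) : Finset (Finset α) :=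
  G.powerset.filter (fun T => P ↑T)

lemma mem_fil {G : Finset α} {P : Set α → Prop} {T : Finset α} :
    T ∈ fil G P ↔ T ⊆ G ∧ P ↑T := by
  rw [fil, Finset.mem_filter, Finset.mem_powerset]

lemma ncard_le_of_indep (hE : M.E.Finite) (hI : M.IsBasis' I X)
    (hJ : M.Indep J) (hJX : J ⊆ X) : J.ncard ≤ I.ncard := by
  obtain ⟨I₂, hI₂, hJI₂⟩ := hJ.subset_isBasis'_of_subset hJX
  have h1 : J.ncard ≤ I₂.ncard :=
    ncard_le_ncard hJI₂ (hE.subset hI₂.indep.subset_ground)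
  have h2 : I₂.ncard = I.ncard := by
    rw [Set.ncard_def, hI₂.encard_eq_encard hI, ← Set.ncard_def]
  omega

lemma rk_eq_ncard_basis' (hE : M.E.Finite) (hI : M.IsBasis' I X) : rk M X = I.ncard := by
  have hub : ∀ n ∈ {n | ∃ J, M.Indep J ∧ J ⊆ X ∧ J.ncard = n}, n ≤ I.ncard := by
    rintro n ⟨J, hJ, hJX, rfl⟩
    exact ncard_le_of_indep hE hI hJ hJX
  have hmem : I.ncard ∈ {n | ∃ J, M.Indep J ∧ J ⊆ X ∧ J.ncard = n} :=
    ⟨I, hI.indep, hI.subset, rfl⟩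
  exact le_antisymm (csSup_le ⟨_, hmem⟩ hub) (le_csSup ⟨I.ncard, hub⟩ hmem)

lemma rk_mono (hE : M.E.Finite) (hXY : X ⊆ Y) : rk M X ≤ rk M Y := by
  obtain ⟨I, hI⟩ := M.exists_isBasis' X
  obtain ⟨J, hJ⟩ := M.exists_isBasis' Y
  rw [rk_eq_ncard_basis' hE hI, rk_eq_ncard_basis' hE hJ]
  exact ncard_le_of_indep hE hJ hI.indep (hI.subset.trans hXY)

lemma rk_closure (hE : M.E.Finite) (X : Set α) : rk M (M.closure X) = rk M X := by
  obtain ⟨I, hI⟩ := M.exists_isBasis' X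
  rw [rk_eq_ncard_basis' hE hI, rk_eq_ncard_basis' hE hI.isBasis_closure_right.isBasis']

lemma rk_insert_of_mem_closure (hE : M.E.Finite) (hX : X ⊆ M.E) (hx : x ∈ M.closure X) :
    rk M (insert x X) = rk M X := by
  have h1 : insert x X ⊆ M.closure X := insert_subset hx (M.subset_closure X hX)
  have h2 := rk_mono hE h1
  rw [rk_closure hE] at h2
  exact le_antisymm h2 (rk_mono hE (subset_insert _ _))

lemma rk_closure_singleton (hE : M.E.Finite) (hM : Loopless M) (he : e ∈ M.E) :
    rk M (M.closure {e}) = 1 := by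
  rw [rk_closure hE]
  have hind : M.Indep {e} := by
    obtain ⟨I, hI⟩ := M.exists_isBasis' {e}
    rcases subset_singleton_iff_eq.mp hI.subset with rfl | rfl
    · exfalso
      have hb : M.IsBasis ∅ {e} := hI.isBasis (singleton_subset_iff.mpr he)
      have h2 : e ∈ M.closure ∅ := hb.subset_closure (mem_singleton e)
      rw [hM] at h2
      exact h2
    · exact hI.indep
  rw [rk_eq_ncard_basis' hE hind.isBasis_self.isBasis', ncard_singleton]

lemma contract_ground (M : Matroid α) (C : Set α) : (contract M C).E = M.E \ C := rfl

lemma no_base_in_aux (hE : M.E.Finite) {I Bm B₂ : Set α}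
    (hI : M.IsBasis' I C) (hIBm : I ⊆ Bm) (hBm : M.IsBase Bm) (hy : y ∈ Bm \ C)
    (hB₂ : M.IsBase B₂) (hB₂Z : B₂ ⊆ C ∪ ((Bm \ C) \ {y})) : False := by
  have hBmE : Bm ⊆ M.E := hBm.subset_ground
  have hB₂E : B₂ ⊆ M.E := hB₂.subset_ground
  have h1 : (B₂ ∩ C).ncard ≤ I.ncard :=
    ncard_le_of_indep hE hI (hB₂.indep.subset inter_subset_left) inter_subset_right
  have hsub : B₂ \ C ⊆ (Bm \ C) \ {y} := by
    rintro z ⟨hz1, hz2⟩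
    rcases hB₂Z hz1 with h | h
    · exact absurd h hz2
    · exact h
  have h2 : (B₂ \ C).ncard ≤ (Bm \ C).ncard - 1 := by
    have hle : (B₂ \ C).ncard ≤ ((Bm \ C) \ {y}).ncard :=
      ncard_le_ncard hsub (hE.subset ((diff_subset.trans diff_subset).trans hBmE))
    have hy' : ((Bm \ C) \ {y}).ncard = (Bm \ C).ncard - 1 := by
      rw [← ncard_diff_singleton_of_mem hy]
    omega
  have hposmc : 0 < (Bm \ C).ncard :=
    (ncard_pos (hE.subset (diff_subset.trans hBmE))).mpr ⟨y, hy⟩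
  have hIC : I = Bm ∩ C :=
    hI.eq_of_subset_indep (hBm.indep.subset inter_subset_left)
      (subset_inter hIBm hI.subset) inter_subset_right
  have hsplitm : (Bm ∩ C).ncard + (Bm \ C).ncard = Bm.ncard :=
    ncard_inter_add_ncard_diff_eq_ncard Bm C (hE.subset hBmE)
  have hsplit2 : (B₂ ∩ C).ncard + (B₂ \ C).ncard = B₂.ncard :=
    ncard_inter_add_ncard_diff_eq_ncard B₂ C (hE.subset hB₂E)
  have hcard : B₂.ncard = Bm.ncard := hB₂.ncard_eq_ncard_of_isBase hBm
  rw [← hIC] at hsplitm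
  omega

lemma contract_indep_of (hE : M.E.Finite) (hI : M.IsBasis' I C) (hJE : J ⊆ M.E \ C)
    (hJI : M.Indep (J ∪ I)) : (contract M C).Indep J := by
  obtain ⟨Bm, hBm, hJIBm⟩ := hJI.exists_isBase_superset
  have hIBm : I ⊆ Bm := subset_union_right.trans hJIBm
  have hJBm : J ⊆ Bm := subset_union_left.trans hJIBm
  set B := (M.E \ C) \ Bm with hBdef
  have hBbase : (M✶ ↾ (M✶.E \ C)).IsBase B := by
    rw [Matroid.dual_ground, isBase_restrict_iff']
    constructor
    · refine ⟨?_, diff_subset⟩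
      rw [dual_indep_iff_exists' ]
      exact ⟨diff_subset.trans diff_subset, ⟨Bm, hBm, disjoint_sdiff_left⟩⟩
    · rintro B'' ⟨hB''i, hB''E⟩ hBB'' z hz
      by_contra hzB
      have hzBm : z ∈ Bm := by
        by_contra hzBm
        exact hzB ⟨hB''E hz, hzBm⟩
      have hzC : z ∉ C := (hB''E hz).2
      obtain ⟨-, B₂, hB₂, hdisj⟩ := (dual_indep_iff_exists' ).mp hB''i
      refine no_base_in_aux hE hI hIBm hBm ⟨hzBm, hzC⟩ hB₂ ?_
      intro w hw
      by_cases hwC : w ∈ C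
      · exact Or.inl hwC
      have hwE : w ∈ M.E := hB₂.subset_ground hw
      have hwB'' : w ∉ B'' := fun h => (hdisj.ne_of_mem h hw) rfl
      have hwB : w ∉ B := fun h => hwB'' (hBB'' h)
      have hwBm : w ∈ Bm := by
        by_contra h
        exact hwB ⟨⟨hwE, hwC⟩, h⟩
      have hwz : w ≠ z := fun h => hwB'' (h ▸ hz)
      exact Or.inr ⟨⟨hwBm, hwC⟩, by simpa using hwz⟩
  rw [contract]
  rw [dual_indep_iff_exists']
  refine ⟨by simpa using hJE, ⟨B, hBbase, ?_⟩⟩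
  exact Set.disjoint_sdiff_right.mono_left hJBm

lemma contract_indep_then (hE : M.E.Finite) (hI : M.IsBasis' I C)
    (hJ : (contract M C).Indep J) : M.Indep (J ∪ I) ∧ J ⊆ M.E \ C := by
  rw [contract, dual_indep_iff_exists'] at hJ
  obtain ⟨hJE, B, hB, hdisjJB⟩ := hJ
  simp only [restrict_ground_eq, Matroid.dual_ground] at hJE
  rw [Matroid.dual_ground, isBase_restrict_iff'] at hB
  obtain ⟨⟨hBi, hBE⟩, hBmax⟩ := hB
  obtain ⟨-, B₂, hB₂, hdisjBB₂⟩ := (dual_indep_iff_exists').mp hBi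
  obtain ⟨B', hB', hIB', hB'sub⟩ := hI.indep.exists_isBase_subset_union_isBase hB₂
  have hBC : Disjoint B C := Set.disjoint_left.mpr (fun _ hz => (hBE hz).2)
  have hdisjBB' : Disjoint B B' :=
    Disjoint.mono_right hB'sub (disjoint_union_right.mpr
      ⟨hBC.mono_right hI.subset, hdisjBB₂⟩)
  have hkey : (M.E \ C) \ B ⊆ B' := by
    rintro y ⟨hyEC, hyB⟩
    by_contra hyB'
    have hins : M✶.Indep (insert y B) := by
      rw [dual_indep_iff_exists']
      exact ⟨insert_subset hyEC.1 (hBE.trans diff_subset),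
        ⟨B', hB', Set.disjoint_left.mpr (by
          rintro z hz
          rcases hz with rfl | hz
          · exact hyB'
          · exact fun h => (hdisjBB'.ne_of_mem hz h) rfl)⟩⟩
    have := hBmax ⟨hins, insert_subset hyEC hBE⟩ (subset_insert y B)
    exact hyB (this (mem_insert y B))
  have hJB' : J ⊆ B' := fun z hz => hkey ⟨hJE hz, (Set.disjoint_left.mp hdisjJB) hz⟩
  exact ⟨hB'.indep.subset (union_subset hJB' hIB'), hJE⟩

lemma rk_contract (hE : M.E.Finite) (hX : X ⊆ M.E \ C) :
    rk (contract M C) X = rk M (X ∪ C) - rk M C := by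
  obtain ⟨I, hI⟩ := M.exists_isBasis' C
  obtain ⟨K, hK, hIK⟩ := hI.indep.subset_isBasis'_of_subset (hI.subset.trans subset_union_right)
  have hKE : K ⊆ M.E := hK.indep.subset_ground
  have hKI : K ∩ C = I :=
    (hI.eq_of_subset_indep (hK.indep.subset inter_subset_left)
      (subset_inter hIK hI.subset) inter_subset_right).symm
  have hKX : K \ I ⊆ X := by
    rintro z ⟨hz1, hz2⟩
    rcases hK.subset hz1 with h | h
    · exact h
    · exact absurd (hKI ▸ ⟨hz1, h⟩) hz2
  have hKdiff : (contract M C).Indep (K \ I) := by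
    refine contract_indep_of hE hI (hKX.trans hX) ?_
    rw [diff_union_of_subset hIK]
    exact hK.indep
  have hIfin : I.Finite := hE.subset hI.indep.subset_ground
  have hKfin : K.Finite := hE.subset hKE
  have hub : ∀ n ∈ {n | ∃ J, (contract M C).Indep J ∧ J ⊆ X ∧ J.ncard = n},
      n ≤ K.ncard - I.ncard := by
    rintro n ⟨J, hJ, hJX, rfl⟩
    obtain ⟨hJI, hJE⟩ := contract_indep_then hE hI hJ
    have hJIX : J ∪ I ⊆ X ∪ C := union_subset (hJX.trans subset_union_left)
      (hI.subset.trans subset_union_right)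
    have hle : (J ∪ I).ncard ≤ K.ncard := ncard_le_of_indep hE hK hJI hJIX
    have hdisj : Disjoint J I := Set.disjoint_left.mpr
      (fun z hz h => ((hJX.trans hX) hz).2 (hI.subset h))
    have hJfin : J.Finite := hE.subset hJI.subset_ground |>.subset subset_union_left
    rw [ncard_union_eq hdisj hJfin hIfin] at hle
    omega
  have hmem : K.ncard - I.ncard ∈
      {n | ∃ J, (contract M C).Indep J ∧ J ⊆ X ∧ J.ncard = n} :=
    ⟨K \ I, hKdiff, hKX, ncard_diff hIK hIfin⟩
  rw [rk_eq_ncard_basis' hE hK, rk_eq_ncard_basis' hE hI]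
  exact le_antisymm (csSup_le ⟨_, hmem⟩ hub) (le_csSup ⟨K.ncard - I.ncard, hub⟩ hmem)

lemma finsum_mem_eq_sum_filter {β : Type*} [AddCommMonoid β] (G : Finset α)
    (𝒜 : Set (Set α)) (h𝒜 : ∀ S ∈ 𝒜, S ⊆ ↑G) (f : Set α → β) :
    ∑ᶠ S ∈ 𝒜, f S = ∑ T ∈ fil G (fun S => S ∈ 𝒜), f ↑T := by
  have himg : 𝒜 = ↑((fil G (fun S => S ∈ 𝒜)).image
      ((↑·) : Finset α → Set α)) := by
    ext S
    simp only [Finset.coe_image, Set.mem_image, Finset.mem_coe, mem_fil]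
    constructor
    · intro hS
      have hfin : S.Finite := G.finite_toSet.subset (h𝒜 S hS)
      refine ⟨hfin.toFinset, ⟨?_, ?_⟩, hfin.coe_toFinset⟩
      · rw [← Finset.coe_subset, hfin.coe_toFinset]; exact h𝒜 S hS
      · rw [hfin.coe_toFinset]; exact hS
    · rintro ⟨T, ⟨hTG, hPT⟩, rfl⟩; exact hPT
  conv_lhs => rw [himg, finsum_mem_coe_finset]
  rw [Finset.sum_image (fun x _ y _ hxy => Finset.coe_injective hxy)]

lemma union_sdiff_cancel_right' {s t : Finset α} (h : Disjoint s t) : (s ∪ t) \ t = s := by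
  ext z
  simp only [Finset.mem_sdiff, Finset.mem_union]
  constructor
  · rintro ⟨h1 | h1, h2⟩
    · exact h1
    · exact absurd h1 h2
  · intro hz
    exact ⟨Or.inl hz, fun hzt => (Finset.disjoint_left.mp h hz) hzt⟩

lemma redCharPoly_contract_eq (hE : M.E.Finite) {T : Finset α} (hT : T ⊆ hE.toFinset) :
    redCharPoly (contract M (↑T : Set α)) =
      ∑ S ∈ (hE.toFinset \ T).powerset,
        (-1 : ℤ) ^ S.card • qAnalogue (rk M M.E - rk M (↑S ∪ ↑T)) := by
  have hTE : (T : Set α) ⊆ M.E := by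
    rw [← hE.coe_toFinset]
    exact Finset.coe_subset.mpr hT
  have hgr : (contract M (↑T : Set α)).E = ↑(hE.toFinset \ T) := by
    rw [contract_ground, Finset.coe_sdiff, hE.coe_toFinset]
  rw [redCharPoly]
  have hset : {S : Set α | S ⊆ (contract M (↑T : Set α)).E}
      = {S : Set α | S ⊆ ↑(hE.toFinset \ T)} := by rw [hgr]
  rw [hset, finsum_mem_eq_sum_filter (hE.toFinset \ T)
    {S : Set α | S ⊆ ↑(hE.toFinset \ T)} (fun S hS => hS) _]
  have hfilter : fil (hE.toFinset \ T)
      (fun S => S ∈ {S : Set α | S ⊆ ↑(hE.toFinset \ T)})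
      = (hE.toFinset \ T).powerset := by
    ext S
    rw [mem_fil, Finset.mem_powerset]
    exact ⟨fun h => h.1, fun h => ⟨h, Finset.coe_subset.mpr h⟩⟩
  rw [hfilter]
  refine Finset.sum_congr rfl (fun S hS => ?_)
  have hSsub : (S : Set α) ⊆ M.E \ ↑T := by
    rw [← hE.coe_toFinset, ← Finset.coe_sdiff]
    exact Finset.coe_subset.mpr (Finset.mem_powerset.mp hS)
  have h1 : rk (contract M (↑T : Set α)) (↑S) = rk M (↑S ∪ ↑T) - rk M ↑T :=
    rk_contract hE hSsub
  have h2 : rk (contract M (↑T : Set α)) (contract M (↑T : Set α)).E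
      = rk M M.E - rk M ↑T := by
    rw [contract_ground]
    rw [rk_contract hE (subset_refl _), diff_union_of_subset hTE]
  have h3 : rk M ↑T ≤ rk M (↑S ∪ ↑T) := rk_mono hE subset_union_right
  have h4 : rk M (↑S ∪ ↑T) ≤ rk M M.E := rk_mono hE (union_subset (hSsub.trans diff_subset) hTE)
  rw [h1, h2, Set.ncard_coe_finset]
  have harith : rk M M.E - rk M ↑T - (rk M (↑S ∪ ↑T) - rk M ↑T)
      = rk M M.E - rk M (↑S ∪ ↑T) := by omega
  rw [harith]


lemma flat_of_closure_eq {F : Set α} (hFE : F ⊆ M.E) (h : M.closure F = F) :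
    M.IsFlat F := by
  refine ⟨fun I X hIF hIX => ?_, hFE⟩
  have h2 : M.closure I ⊆ M.closure F := M.closure_subset_closure hIF.subset
  exact hIX.subset_closure.trans (h2.trans h.subset)

lemma It_eq_zero_of_not_flat (hE : M.E.Finite) {T : Finset α} (hT : T ⊆ hE.toFinset)
    (hflat : ¬ M.IsFlat (↑T : Set α)) :
    ∑ S ∈ (hE.toFinset \ T).powerset,
      (-1 : ℤ) ^ S.card •
        (Polynomial.X : Polynomial ℤ) ^ (rk M M.E - rk M (↑S ∪ ↑T)) = 0 := by
  have hTE : (T : Set α) ⊆ M.E := by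
    rw [← hE.coe_toFinset]; exact Finset.coe_subset.mpr hT
  have hcl : (↑T : Set α) ⊆ M.closure ↑T := M.subset_closure ↑T hTE
  have hne : M.closure (↑T : Set α) ≠ ↑T := fun h => hflat (flat_of_closure_eq hTE h)
  obtain ⟨x, hxcl, hxT⟩ : ∃ x, x ∈ M.closure (↑T : Set α) ∧ x ∉ (↑T : Set α) := by
    by_contra h
    push_neg at h
    exact hne (Subset.antisymm h hcl)
  have hxE : x ∈ M.E := mem_ground_of_mem_closure hxcl
  have hxEF : x ∈ hE.toFinset \ T := by
    rw [Finset.mem_sdiff, hE.mem_toFinset]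
    exact ⟨hxE, by simpa using hxT⟩
  rw [← Finset.insert_erase hxEF, Finset.sum_powerset_insert (Finset.notMem_erase _ _)]
  have hcancel : ∀ S ∈ ((hE.toFinset \ T).erase x).powerset,
      (-1 : ℤ) ^ (insert x S).card •
          (Polynomial.X : Polynomial ℤ) ^ (rk M M.E - rk M (↑(insert x S) ∪ ↑T))
        = - ((-1 : ℤ) ^ S.card •
          (Polynomial.X : Polynomial ℤ) ^ (rk M M.E - rk M (↑S ∪ ↑T))) := by
    intro S hS
    have hxS : x ∉ S := fun h => Finset.notMem_erase x _ (Finset.mem_powerset.mp hS h)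
    have hSE : (↑S : Set α) ⊆ M.E := by
      intro z hz
      have hz' : z ∈ (hE.toFinset \ T).erase x :=
        Finset.mem_powerset.mp hS (Finset.mem_coe.mp hz)
      have hz2 := Finset.mem_sdiff.mp (Finset.mem_of_mem_erase hz')
      exact hE.mem_toFinset.mp hz2.1
    have hrk : rk M (↑(insert x S) ∪ ↑T) = rk M (↑S ∪ ↑T) := by
      rw [Finset.coe_insert, Set.insert_union]
      exact rk_insert_of_mem_closure hE (union_subset hSE hTE)
        ((M.closure_subset_closure subset_union_right) hxcl)
    rw [hrk, Finset.card_insert_of_notMem hxS, pow_succ, mul_neg_one, neg_smul]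
  rw [Finset.sum_congr rfl hcancel, Finset.sum_neg_distrib, add_neg_cancel]

lemma sum_supersets_eq (hE : M.E.Finite) {F0f : Finset α} (hF0 : F0f ⊆ hE.toFinset) :
    ∑ T ∈ hE.toFinset.powerset.filter (fun T => F0f ⊆ T),
      ∑ S ∈ (hE.toFinset \ T).powerset,
        (-1 : ℤ) ^ S.card •
          (Polynomial.X : Polynomial ℤ) ^ (rk M M.E - rk M (↑S ∪ ↑T))
    = (Polynomial.X : Polynomial ℤ) ^ (rk M M.E - rk M ↑F0f) := by
  classical
  have step1 : ∑ T ∈ hE.toFinset.powerset.filter (fun T => F0f ⊆ T),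
      ∑ S ∈ (hE.toFinset \ T).powerset,
        (-1 : ℤ) ^ S.card •
          (Polynomial.X : Polynomial ℤ) ^ (rk M M.E - rk M (↑S ∪ ↑T))
      = ∑ U ∈ hE.toFinset.powerset.filter (fun T => F0f ⊆ T),
        ∑ S ∈ (U \ F0f).powerset,
          (-1 : ℤ) ^ S.card •
            (Polynomial.X : Polynomial ℤ) ^ (rk M M.E - rk M ↑U) := by
    rw [Finset.sum_sigma' (hE.toFinset.powerset.filter (fun T => F0f ⊆ T))
      (fun T => (hE.toFinset \ T).powerset),
      Finset.sum_sigma' (hE.toFinset.powerset.filter (fun T => F0f ⊆ T))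
      (fun U => (U \ F0f).powerset)]
    refine Finset.sum_bij' (fun p _ => ⟨p.1 ∪ p.2, p.2⟩) (fun q _ => ⟨q.1 \ q.2, q.2⟩)
      ?_ ?_ ?_ ?_ ?_
    · rintro ⟨T, S⟩ hp
      simp only [Finset.mem_sigma, Finset.mem_filter, Finset.mem_powerset] at hp ⊢
      obtain ⟨⟨hTEF, hF0T⟩, hS⟩ := hp
      refine ⟨⟨Finset.union_subset hTEF (hS.trans (Finset.sdiff_subset)), 
        hF0T.trans Finset.subset_union_left⟩, ?_⟩
      intro z hz
      rw [Finset.mem_sdiff]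
      exact ⟨Finset.mem_union_right _ hz,
        fun hzF => (Finset.mem_sdiff.mp (hS hz)).2 (hF0T hzF)⟩
    · rintro ⟨U, S⟩ hq
      simp only [Finset.mem_sigma, Finset.mem_filter, Finset.mem_powerset] at hq ⊢
      obtain ⟨⟨hUEF, hF0U⟩, hS⟩ := hq
      have hSU : S ⊆ U := hS.trans Finset.sdiff_subset
      refine ⟨⟨Finset.sdiff_subset.trans hUEF, ?_⟩, ?_⟩
      · intro z hz
        rw [Finset.mem_sdiff]
        exact ⟨hF0U hz, fun hzS => (Finset.mem_sdiff.mp (hS hzS)).2 hz⟩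
      · intro z hz
        rw [Finset.mem_sdiff]
        exact ⟨hUEF (hSU hz), fun h => (Finset.mem_sdiff.mp h).2 hz⟩
    · rintro ⟨T, S⟩ hp
      simp only [Finset.mem_sigma, Finset.mem_filter, Finset.mem_powerset] at hp
      have hdisj : Disjoint T S := Finset.disjoint_right.mpr
        (fun {z} hzS hzT => (Finset.mem_sdiff.mp (hp.2 hzS)).2 hzT)
      have hTS : (T ∪ S) \ S = T := union_sdiff_cancel_right' hdisj
      show (⟨(T ∪ S) \ S, S⟩ : Σ _ : Finset α, Finset α) = ⟨T, S⟩
      rw [hTS]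
    · rintro ⟨U, S⟩ hq
      simp only [Finset.mem_sigma, Finset.mem_filter, Finset.mem_powerset] at hq
      have hSU : S ⊆ U := hq.2.trans Finset.sdiff_subset
      have hUS : (U \ S) ∪ S = U := Finset.sdiff_union_of_subset hSU
      show (⟨(U \ S) ∪ S, S⟩ : Σ _ : Finset α, Finset α) = ⟨U, S⟩
      rw [hUS]
    · rintro ⟨T, S⟩ hp
      show (-1 : ℤ) ^ S.card • (Polynomial.X : Polynomial ℤ) ^ (rk M M.E - rk M (↑S ∪ ↑T))
        = (-1 : ℤ) ^ S.card • (Polynomial.X : Polynomial ℤ) ^ (rk M M.E - rk M ↑(T ∪ S))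
      have hcu : (↑S : Set α) ∪ ↑T = ↑(T ∪ S) := by
        rw [Finset.coe_union, Set.union_comm]
      rw [hcu]
  rw [step1]
  have step2 : ∀ U ∈ hE.toFinset.powerset.filter (fun T => F0f ⊆ T),
      ∑ S ∈ (U \ F0f).powerset,
        (-1 : ℤ) ^ S.card •
          (Polynomial.X : Polynomial ℤ) ^ (rk M M.E - rk M ↑U)
      = (if U \ F0f = ∅ then (1 : ℤ) else 0) •
          (Polynomial.X : Polynomial ℤ) ^ (rk M M.E - rk M ↑U) := by
    intro U _
    rw [← Finset.sum_smul, Finset.sum_powerset_neg_one_pow_card]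
  rw [Finset.sum_congr rfl step2]
  rw [Finset.sum_eq_single F0f]
  · rw [Finset.sdiff_self, if_pos rfl, one_smul]
  · intro U hU hUne
    simp only [Finset.mem_filter, Finset.mem_powerset] at hU
    have : U \ F0f ≠ ∅ := by
      intro h
      exact hUne (Finset.Subset.antisymm
        ((Finset.sdiff_eq_empty_iff_subset).mp h) hU.2)
    rw [if_neg this, zero_smul]
  · intro h
    exact absurd (Finset.mem_filter.mpr ⟨Finset.mem_powerset.mpr hF0, subset_refl _⟩) h


lemma key_per_elem (hE : M.E.Finite) (hM : Loopless M) {e : α} (he : e ∈ M.E) :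
    ∑ T ∈ (fil hE.toFinset
        (fun F => F ∈ {F : Set α | M.IsFlat F ∧ F ≠ ∅ ∧ F ≠ M.E})).filter
        (fun T => e ∈ T),
      ∑ S ∈ (hE.toFinset \ T).powerset,
        (-1 : ℤ) ^ S.card •
          (Polynomial.X : Polynomial ℤ) ^ (rk M M.E - rk M (↑S ∪ ↑T))
    = (Polynomial.X : Polynomial ℤ) ^ (rk M M.E - 1) - 1 := by
  classical
  have hF0E : M.closure {e} ⊆ M.E := M.closure_subset_ground {e}
  have hF0fin : (M.closure {e}).Finite := hE.subset hF0E
  set F0f : Finset α := hF0fin.toFinset with hF0f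
  have hF0coe : (↑F0f : Set α) = M.closure {e} := hF0fin.coe_toFinset
  have heF0 : e ∈ F0f := by
    rw [hF0f, Set.Finite.mem_toFinset]
    exact M.mem_closure_self e he
  have hF0sub : F0f ⊆ hE.toFinset := by
    intro z hz
    rw [hE.mem_toFinset]
    exact hF0E (by rw [← hF0coe]; exact_mod_cast hz)
  -- identify the index set
  have hfe : (fil hE.toFinset
      (fun F => F ∈ {F : Set α | M.IsFlat F ∧ F ≠ ∅ ∧ F ≠ M.E})).filter (fun T => e ∈ T)
      = (hE.toFinset.powerset.filter (fun (T : Finset α) => M.IsFlat ↑T ∧ F0f ⊆ T)).erase hE.toFinset := by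
    ext T
    simp only [Finset.mem_filter, mem_fil, Finset.mem_powerset, Finset.mem_erase,
      Set.mem_setOf_eq]
    constructor
    · rintro ⟨⟨hTEF, hfl, _, hnE⟩, heT⟩
      refine ⟨fun h => hnE (by rw [h, hE.coe_toFinset]), hTEF, hfl, ?_⟩
      intro z hz
      have hzF0 : (z : α) ∈ M.closure {e} := by
        rw [← hF0coe]; exact_mod_cast hz
      have hclsub : M.closure {e} ⊆ ↑T := by
        have h1 : M.closure {e} ⊆ M.closure ↑T :=
          M.closure_subset_closure (by simpa using heT)
        rw [hfl.closure] at h1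
        exact h1
      exact_mod_cast hclsub hzF0
    · rintro ⟨hTne, hTEF, hfl, hF0T⟩
      have heT : e ∈ T := hF0T heF0
      refine ⟨⟨hTEF, hfl, ?_, ?_⟩, heT⟩
      · intro h
        have : e ∈ (↑T : Set α) := heT
        rw [h] at this
        exact this
      · intro h
        apply hTne
        apply Finset.coe_injective
        rw [h, hE.coe_toFinset]
  rw [hfe]
  have hEFmem : hE.toFinset ∈ hE.toFinset.powerset.filter
      (fun (T : Finset α) => M.IsFlat ↑T ∧ F0f ⊆ T) := by
    rw [Finset.mem_filter, Finset.mem_powerset]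
    refine ⟨subset_refl _, ?_, hF0sub⟩
    rw [hE.coe_toFinset]
    exact M.ground_isFlat
  have herase := Finset.sum_erase_add
    (hE.toFinset.powerset.filter (fun (T : Finset α) => M.IsFlat ↑T ∧ F0f ⊆ T))
    (fun (T : Finset α) => ∑ S ∈ (hE.toFinset \ T).powerset,
      (-1 : ℤ) ^ S.card •
        (Polynomial.X : Polynomial ℤ) ^ (rk M M.E - rk M (↑S ∪ ↑T))) hEFmem
  beta_reduce at herase
  have hItEF : ∑ S ∈ (hE.toFinset \ hE.toFinset).powerset,
      (-1 : ℤ) ^ S.card •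
        (Polynomial.X : Polynomial ℤ) ^ (rk M M.E - rk M (↑S ∪ ↑hE.toFinset)) = 1 := by
    rw [Finset.sdiff_self, Finset.powerset_empty, Finset.sum_singleton]
    simp [hE.coe_toFinset]
  have hflatsum : ∑ T ∈ hE.toFinset.powerset.filter (fun (T : Finset α) => M.IsFlat ↑T ∧ F0f ⊆ T),
      ∑ S ∈ (hE.toFinset \ T).powerset,
        (-1 : ℤ) ^ S.card •
          (Polynomial.X : Polynomial ℤ) ^ (rk M M.E - rk M (↑S ∪ ↑T))
      = ∑ T ∈ hE.toFinset.powerset.filter (fun (T : Finset α) => F0f ⊆ T),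
        ∑ S ∈ (hE.toFinset \ T).powerset,
          (-1 : ℤ) ^ S.card •
            (Polynomial.X : Polynomial ℤ) ^ (rk M M.E - rk M (↑S ∪ ↑T)) := by
    refine Finset.sum_subset ?_ ?_
    · intro T hT
      rw [Finset.mem_filter] at hT ⊢
      exact ⟨hT.1, hT.2.2⟩
    · intro T hT hT2
      rw [Finset.mem_filter] at hT
      have hnf : ¬ M.IsFlat (↑T : Set α) := by
        intro hfl
        exact hT2 (Finset.mem_filter.mpr ⟨hT.1, hfl, hT.2⟩)
      exact It_eq_zero_of_not_flat hE (Finset.mem_powerset.mp hT.1) hnf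
  have hsup := sum_supersets_eq hE hF0sub
  have hrkF0 : rk M (↑F0f : Set α) = 1 := by
    rw [hF0coe]
    exact rk_closure_singleton hE hM he
  rw [hrkF0] at hsup
  rw [hflatsum, hsup, hItEF] at herase
  -- herase : erase-sum + 1 = X^(n-1)
  have := eq_sub_of_add_eq herase
  exact this


theorem sum_ncard_smul_redCharPoly_contract (M : Matroid α) (hE : M.E.Finite)
    (hM : Loopless M) :
    ∑ᶠ F ∈ {F : Set α | M.IsFlat F ∧ F ≠ ∅ ∧ F ≠ M.E},
        F.ncard • redCharPoly (contract M F)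
      = M.E.ncard • qAnalogue (rk M M.E - 1) := by
  classical
  rw [finsum_mem_eq_sum_filter hE.toFinset
    {F : Set α | M.IsFlat F ∧ F ≠ ∅ ∧ F ≠ M.E}
    (fun S hS => by rw [hE.coe_toFinset]; exact hS.1.subset_ground) _]
  have hstep1 : ∀ T ∈ fil hE.toFinset (fun F => F ∈ {F : Set α | M.IsFlat F ∧ F ≠ ∅ ∧ F ≠ M.E}),
      ((↑T : Set α).ncard • redCharPoly (contract M ↑T))
        = T.card • ∑ S ∈ (hE.toFinset \ T).powerset,
            (-1 : ℤ) ^ S.card • qAnalogue (rk M M.E - rk M (↑S ∪ ↑T)) := by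
    intro T hT
    rw [mem_fil] at hT
    rw [Set.ncard_coe_finset, redCharPoly_contract_eq hE hT.1]
  refine (Finset.sum_congr rfl hstep1).trans ?_
  have hEcard : M.E.ncard = hE.toFinset.card := by
    conv_lhs => rw [← hE.coe_toFinset]
    rw [Set.ncard_coe_finset]
  rw [hEcard]
  refine mul_left_cancel₀ X_sub_one_ne_zero ?_
  conv_rhs => rw [mul_smul_comm, X_sub_one_mul_qA]
  rw [Finset.mul_sum]
  have hstep2 : ∀ T ∈ fil hE.toFinset (fun F => F ∈ {F : Set α | M.IsFlat F ∧ F ≠ ∅ ∧ F ≠ M.E}),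
      (X - 1 : Polynomial ℤ) * (T.card • ∑ S ∈ (hE.toFinset \ T).powerset,
          (-1 : ℤ) ^ S.card • qAnalogue (rk M M.E - rk M (↑S ∪ ↑T)))
        = T.card • ∑ S ∈ (hE.toFinset \ T).powerset,
          (-1 : ℤ) ^ S.card •
            (Polynomial.X : Polynomial ℤ) ^ (rk M M.E - rk M (↑S ∪ ↑T)) := by
    intro T hT
    rw [mem_fil, Set.mem_setOf_eq] at hT
    obtain ⟨hTEF, hfl, hne, hnE⟩ := hT
    have hdne : hE.toFinset \ T ≠ ∅ := by
      intro h
      apply hnE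
      have hTE2 : T = hE.toFinset :=
        Finset.Subset.antisymm hTEF (Finset.sdiff_eq_empty_iff_subset.mp h)
      rw [hTE2, hE.coe_toFinset]
    rw [mul_smul_comm]
    congr 1
    rw [Finset.mul_sum]
    have hper : ∀ S ∈ (hE.toFinset \ T).powerset,
        (X - 1 : Polynomial ℤ) *
            ((-1 : ℤ) ^ S.card • qAnalogue (rk M M.E - rk M (↑S ∪ ↑T)))
          = (-1 : ℤ) ^ S.card •
              (Polynomial.X : Polynomial ℤ) ^ (rk M M.E - rk M (↑S ∪ ↑T))
            - (-1 : ℤ) ^ S.card • (1 : Polynomial ℤ) := by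
      intro S _
      rw [mul_smul_comm, X_sub_one_mul_qA, smul_sub]
    rw [Finset.sum_congr rfl hper, Finset.sum_sub_distrib, ← Finset.sum_smul,
      Finset.sum_powerset_neg_one_pow_card, if_neg hdne, zero_smul, sub_zero]
  rw [Finset.sum_congr rfl hstep2]
  have hstep3 : ∀ T ∈ fil hE.toFinset (fun F => F ∈ {F : Set α | M.IsFlat F ∧ F ≠ ∅ ∧ F ≠ M.E}),
      (T.card • ∑ S ∈ (hE.toFinset \ T).powerset,
          (-1 : ℤ) ^ S.card •
            (Polynomial.X : Polynomial ℤ) ^ (rk M M.E - rk M (↑S ∪ ↑T)))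
      = ∑ e ∈ hE.toFinset, if e ∈ T then (∑ S ∈ (hE.toFinset \ T).powerset,
          (-1 : ℤ) ^ S.card •
            (Polynomial.X : Polynomial ℤ) ^ (rk M M.E - rk M (↑S ∪ ↑T))) else 0 := by
    intro T hT
    rw [mem_fil] at hT
    rw [← Finset.sum_filter]
    have hf : hE.toFinset.filter (fun e => e ∈ T) = T := by
      ext z
      simp only [Finset.mem_filter]
      exact ⟨fun h => h.2, fun h => ⟨hT.1 h, h⟩⟩
    rw [hf, Finset.sum_const]
  rw [Finset.sum_congr rfl hstep3, Finset.sum_comm]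
  have hstep4 : ∀ e ∈ hE.toFinset,
      (∑ T ∈ fil hE.toFinset (fun F => F ∈ {F : Set α | M.IsFlat F ∧ F ≠ ∅ ∧ F ≠ M.E}),
        if e ∈ T then (∑ S ∈ (hE.toFinset \ T).powerset,
          (-1 : ℤ) ^ S.card •
            (Polynomial.X : Polynomial ℤ) ^ (rk M M.E - rk M (↑S ∪ ↑T))) else 0)
      = (Polynomial.X : Polynomial ℤ) ^ (rk M M.E - 1) - 1 := by
    intro e heEF
    rw [← Finset.sum_filter]
    exact key_per_elem hE hM (hE.mem_toFinset.mp heEF)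
  rw [Finset.sum_congr rfl hstep4, Finset.sum_const]

end Aux


end MatroidZeta
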